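/- Let z₀, …, z_d ∈ ℝᵈ be an η-approximate regular simplex (min pairwise distance ≥ (1-η)·max pairwise distance) with minimum edge length at least λ > 0, and suppose S₁, S₂ : ℝᵈ → ℝᵈ are affine maps with max_j ‖S₁(z_j) - S₂(z_j)‖ ≤ ε. Then there is a constant C depending only on d such that if η ≤ 1/C, then ‖S₁(x) - S₂(x)‖ ≤ C·ε·‖x - z₀‖/λ + ε for all x ∈ ℝᵈ. -/

import Mathlib

open scoped RealInnerProductSpace
open Finset

set_option maxHeartbeats 1600000 in
/-- Two affine maps that nearly agree on the vertices of an approximate regular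
simplex with minimum edge length `λ` nearly agree everywhere. -/
theorem stmt14 (d : ℕ) :
    ∃ C : ℝ, 0 < C ∧
      ∀ (z : Fin (d + 1) → EuclideanSpace ℝ (Fin d)) (η lam ε : ℝ),
        0 ≤ η → 0 < lam → 0 ≤ ε →
        (∀ i j k l : Fin (d + 1), i ≠ j → k ≠ l →
          (1 - η) * dist (z k) (z l) ≤ dist (z i) (z j)) →
        (∀ i j : Fin (d + 1), i ≠ j → lam ≤ dist (z i) (z j)) →
        ∀ S₁ S₂ : EuclideanSpace ℝ (Fin d) →ᵃ[ℝ] EuclideanSpace ℝ (Fin d),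
          (∀ j, ‖S₁ (z j) - S₂ (z j)‖ ≤ ε) →
          η ≤ 1 / C →
          ∀ x, ‖S₁ x - S₂ x‖ ≤ C * ε * ‖x - z 0‖ / lam + ε := by
  refine ⟨36 * (d + 1), by positivity, ?_⟩
  intro z η lam ε hη hlam hε hreg hmin S₁ S₂ hS hηC x
  rcases Nat.eq_zero_or_pos d with hd0 | hd
  · -- degenerate case `d = 0`: the space is a single point
    subst hd0
    haveI : Subsingleton (EuclideanSpace ℝ (Fin 0)) :=
      ⟨fun a b => PiLp.ext fun i => i.elim0⟩
    have hx : x = z 0 := Subsingleton.elim _ _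
    have h0 : ‖(z 0 : EuclideanSpace ℝ (Fin 0)) - z 0‖ = 0 := by
      rw [sub_self, norm_zero]
    rw [hx, h0]
    have h1 : (36 : ℝ) * (((0:ℕ):ℝ) + 1) * ε * 0 / lam = 0 := by ring
    have := hS 0
    push_cast at h1 ⊢
    rw [h1]
    linarith
  · -- main case `d ≥ 1`
    haveI : NeZero d := ⟨hd.ne'⟩
    have hd1 : (1:ℝ) ≤ (d:ℝ) := by exact_mod_cast hd
    set i0 : Fin d := ⟨0, hd⟩ with hi0
    set M : ℝ := dist (z i0.succ) (z 0) with hMdef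
    have hη36 : η ≤ 1 / 36 := by
      refine le_trans hηC ?_
      rw [div_le_div_iff₀ (by positivity) (by norm_num)]
      nlinarith
    have hlamM : lam ≤ M := hmin _ _ (Fin.succ_ne_zero i0)
    have hMpos : 0 < M := lt_of_lt_of_le hlam hlamM
    have hlow : ∀ i j : Fin (d+1), i ≠ j → (1 - η) * M ≤ dist (z i) (z j) :=
      fun i j h => hreg i j _ _ h (Fin.succ_ne_zero i0)
    have hup : ∀ i j : Fin (d+1), i ≠ j → dist (z i) (z j) ≤ (1 + 2*η) * M := by
      intro i j h
      have h1 := hreg i0.succ 0 i j (Fin.succ_ne_zero i0) h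
      rw [← hMdef] at h1
      nlinarith [dist_nonneg (x := z i) (y := z j),
        mul_nonneg hη (dist_nonneg (x := z i) (y := z j)),
        mul_nonneg (mul_nonneg hη hη) (dist_nonneg (x := z i) (y := z j))]
    set v : Fin d → EuclideanSpace ℝ (Fin d) := fun i => z i.succ - z 0 with hv
    have hnv : ∀ i, ‖v i‖ = dist (z i.succ) (z 0) := fun i => (dist_eq_norm _ _).symm
    have hnvv : ∀ i j : Fin d, ‖v i - v j‖ = dist (z i.succ) (z j.succ) := by
      intro i j
      have : v i - v j = z i.succ - z j.succ := by simp only [hv]; abel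
      rw [this, dist_eq_norm]
    -- bounds on norms of the v's
    have hb : ∀ i : Fin d, (1 - η) * M ≤ ‖v i‖ ∧ ‖v i‖ ≤ (1 + 2*η) * M := by
      intro i
      rw [hnv]
      exact ⟨hlow _ _ (Fin.succ_ne_zero i), hup _ _ (Fin.succ_ne_zero i)⟩
    have hbb : ∀ i j : Fin d, i ≠ j →
        (1 - η) * M ≤ ‖v i - v j‖ ∧ ‖v i - v j‖ ≤ (1 + 2*η) * M := by
      intro i j hij
      rw [hnvv]
      have h' : i.succ ≠ j.succ := fun h => hij (Fin.succ_injective _ h)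
      exact ⟨hlow _ _ h', hup _ _ h'⟩
    -- squares of quantities in the range [(1-η)M, (1+2η)M]
    have hsq : ∀ t : ℝ, 0 ≤ t → (1 - η) * M ≤ t → t ≤ (1 + 2*η) * M →
        (1 - 2*η) * M^2 ≤ t^2 ∧ t^2 ≤ (1 + 5*η) * M^2 := by
      intro t ht hl hu
      have h1 : ((1 - η) * M) * ((1 - η) * M) ≤ t * t :=
        mul_self_le_mul_self (by nlinarith) hl
      have h2 : t * t ≤ ((1 + 2*η) * M) * ((1 + 2*η) * M) :=
        mul_self_le_mul_self ht hu
      constructor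
      · nlinarith [mul_nonneg (mul_nonneg hη hη) (sq_nonneg M)]
      · nlinarith [mul_nonneg (mul_nonneg hη hη) (sq_nonneg M),
          mul_nonneg hη (sq_nonneg M)]
    have hηM2 : (0:ℝ) ≤ η * M^2 := mul_nonneg hη (sq_nonneg M)
    -- bound on the "error" matrix entries
    have hE : ∀ i j : Fin d,
        abs (⟪v i, v j⟫ - M^2/2 - (if i = j then M^2/2 else 0)) ≤ 9 * η * M^2 := by
      intro i j
      by_cases hij : i = j
      · subst hij
        rw [if_pos rfl, real_inner_self_eq_norm_sq]
        obtain ⟨l, u⟩ := hb i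
        obtain ⟨l2, u2⟩ := hsq ‖v i‖ (norm_nonneg _) l u
        rw [abs_le]
        constructor <;> linarith [hηM2]
      · rw [if_neg hij]
        have e := norm_sub_sq_real (v i) (v j)
        obtain ⟨li, ui⟩ := hb i
        obtain ⟨lj, uj⟩ := hb j
        obtain ⟨lij, uij⟩ := hbb i j hij
        obtain ⟨li2, ui2⟩ := hsq ‖v i‖ (norm_nonneg _) li ui
        obtain ⟨lj2, uj2⟩ := hsq ‖v j‖ (norm_nonneg _) lj uj
        obtain ⟨lij2, uij2⟩ := hsq ‖v i - v j‖ (norm_nonneg _) lij uij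
        rw [abs_le]
        constructor <;> linarith [hηM2]
    -- key quantitative lower bound
    have key : ∀ c : Fin d → ℝ,
        M^2/4 * (∑ i, c i ^ 2) ≤ ‖∑ i, c i • v i‖^2 := by
      intro c
      have expand : ‖∑ i, c i • v i‖^2 = ∑ i, ∑ j, c i * c j * ⟪v i, v j⟫ := by
        rw [← real_inner_self_eq_norm_sq]
        rw [sum_inner]
        refine Finset.sum_congr rfl fun i _ => ?_
        rw [inner_sum]
        refine Finset.sum_congr rfl fun j _ => ?_
        rw [real_inner_smul_left, real_inner_smul_right]
        ring
      set E : Fin d → Fin d → ℝ :=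
        fun i j => ⟪v i, v j⟫ - M^2/2 - (if i = j then M^2/2 else 0) with hEdef
      have split : ∀ i j : Fin d, c i * c j * ⟪v i, v j⟫ =
          M^2/2 * (c i * c j) + (if i = j then M^2/2 * (c i * c j) else 0)
            + c i * c j * E i j := by
        intro i j
        by_cases hij : i = j
        · subst hij
          have hEii : E i i = ⟪v i, v i⟫ - M^2/2 - M^2/2 := by
            rw [hEdef]; simp
          rw [hEii, if_pos rfl]; ring
        · have hEij : E i j = ⟪v i, v j⟫ - M^2/2 := by
            rw [hEdef]; simp [hij]
          rw [hEij, if_neg hij]; ring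
      have ha : ∑ i, ∑ j, M^2/2 * (c i * c j) = M^2/2 * (∑ i, c i)^2 := by
        rw [pow_two (∑ i, c i), Finset.sum_mul_sum, Finset.mul_sum]
        refine Finset.sum_congr rfl fun i _ => ?_
        rw [Finset.mul_sum]
      have hbsum : ∑ i, ∑ j, (if i = j then M^2/2 * (c i * c j) else 0)
          = M^2/2 * (∑ i, c i ^ 2) := by
        rw [Finset.mul_sum]
        refine Finset.sum_congr rfl fun i _ => ?_
        rw [Finset.sum_ite_eq Finset.univ i (fun j => M^2/2 * (c i * c j)),
          if_pos (Finset.mem_univ i)]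
        ring
      have hsum : ∑ i, ∑ j, c i * c j * ⟪v i, v j⟫ =
          M^2/2 * (∑ i, c i)^2 + M^2/2 * (∑ i, c i ^ 2)
            + ∑ i, ∑ j, c i * c j * E i j := by
        rw [← ha, ← hbsum]
        rw [← Finset.sum_add_distrib, ← Finset.sum_add_distrib]
        refine Finset.sum_congr rfl fun i _ => ?_
        rw [← Finset.sum_add_distrib, ← Finset.sum_add_distrib]
        exact Finset.sum_congr rfl fun j _ => split i j
      have habs : |∑ i, ∑ j, c i * c j * E i j| ≤ 9 * η * M^2 * (∑ i, |c i|)^2 := by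
        have step1 : |∑ i, ∑ j, c i * c j * E i j| ≤ ∑ i, ∑ j, |c i| * |c j| * (9 * η * M^2) := by
          calc |∑ i, ∑ j, c i * c j * E i j|
              ≤ ∑ i, |∑ j, c i * c j * E i j| := Finset.abs_sum_le_sum_abs _ _
            _ ≤ ∑ i, ∑ j, |c i * c j * E i j| :=
                Finset.sum_le_sum fun i _ => Finset.abs_sum_le_sum_abs _ _
            _ ≤ ∑ i, ∑ j, |c i| * |c j| * (9 * η * M^2) := by
                refine Finset.sum_le_sum fun i _ => Finset.sum_le_sum fun j _ => ?_
                rw [abs_mul, abs_mul]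
                exact mul_le_mul_of_nonneg_left (hE i j) (by positivity)
        have step2 : ∑ i, ∑ j, |c i| * |c j| * (9 * η * M^2)
            = 9 * η * M^2 * (∑ i, |c i|)^2 := by
          rw [pow_two (∑ i, |c i|), Finset.sum_mul_sum, Finset.mul_sum]
          refine Finset.sum_congr rfl fun i _ => ?_
          rw [Finset.mul_sum]
          exact Finset.sum_congr rfl fun j _ => by ring
        rw [← step2]; exact step1
      have hcs : (∑ i, |c i|)^2 ≤ (d:ℝ) * ∑ i, c i ^ 2 := by
        have h := sq_sum_le_card_mul_sum_sq (s := (Finset.univ : Finset (Fin d)))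
          (f := fun i => |c i|)
        simpa [sq_abs] using h
      have hRlb : -(9 * η * M^2 * ((d:ℝ) * ∑ i, c i ^ 2))
          ≤ ∑ i, ∑ j, c i * c j * E i j := by
        have h1 := neg_abs_le (∑ i, ∑ j, c i * c j * E i j)
        have h2 : 9 * η * M^2 * (∑ i, |c i|)^2 ≤ 9 * η * M^2 * ((d:ℝ) * ∑ i, c i ^ 2) :=
          mul_le_mul_of_nonneg_left hcs (by positivity)
        linarith
      have hηd : 9 * η * (d:ℝ) ≤ 1/4 := by
        have h36 : (0:ℝ) < 36 * ((d:ℝ) + 1) := by positivity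
        have h := (le_div_iff₀ h36).mp hηC
        nlinarith
      have hS1 : (0:ℝ) ≤ ∑ i, c i ^ 2 := Finset.sum_nonneg fun i _ => sq_nonneg _
      rw [expand, hsum]
      nlinarith [sq_nonneg (∑ i, c i), sq_nonneg M,
        mul_nonneg (mul_nonneg hη (sq_nonneg M)) hS1]
    -- linear independence and basis
    have hli : LinearIndependent ℝ v := by
      rw [Fintype.linearIndependent_iff]
      intro c hc i
      have hk := key c
      rw [hc, norm_zero] at hk
      have hS1 : ∑ j, c j ^ 2 ≤ 0 := by nlinarith [hk, mul_pos hMpos hMpos]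
      have hci : c i ^ 2 ≤ 0 := by
        have h' : c i ^ 2 ≤ ∑ j, c j ^ 2 :=
          Finset.single_le_sum (f := fun j => c j ^ 2)
            (fun j _ => sq_nonneg (c j)) (Finset.mem_univ i)
        linarith
      have h0 : c i ^ 2 = 0 := le_antisymm hci (sq_nonneg _)
      exact pow_eq_zero_iff two_ne_zero |>.mp h0
    have hcard : Fintype.card (Fin d) = Module.finrank ℝ (EuclideanSpace ℝ (Fin d)) := by
      simp [finrank_euclideanSpace_fin]
    haveI : Nonempty (Fin d) := ⟨i0⟩
    set B := basisOfLinearIndependentOfCardEqFinrank hli hcard with hB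
    have hBv : ∀ i, B i = v i := fun i => by
      rw [hB, coe_basisOfLinearIndependentOfCardEqFinrank]
    set c : Fin d → ℝ := fun i => B.repr (x - z 0) i with hc
    have hrep : ∑ i, c i • v i = x - z 0 := by
      have h := B.sum_repr (x - z 0)
      calc ∑ i, c i • v i = ∑ i, B.repr (x - z 0) i • B i :=
            Finset.sum_congr rfl fun i _ => by rw [hBv]
        _ = x - z 0 := h
    -- bound on the coefficients
    have hc2 : (∑ i, c i ^ 2) * M^2 ≤ 4 * ‖x - z 0‖^2 := by
      have hk := key c
      rw [hrep] at hk
      nlinarith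
    have hT : (∑ i, |c i|) * M ≤ 2 * (d:ℝ) * ‖x - z 0‖ := by
      have hcs : (∑ i, |c i|)^2 ≤ (d:ℝ) * ∑ i, c i ^ 2 := by
        have h := sq_sum_le_card_mul_sum_sq (s := (Finset.univ : Finset (Fin d)))
          (f := fun i => |c i|)
        simpa [sq_abs] using h
      have hsq2 : ((∑ i, |c i|) * M)^2 ≤ (2 * (d:ℝ) * ‖x - z 0‖)^2 := by
        have hd0 : (0:ℝ) ≤ (d:ℝ) := by positivity
        nlinarith [sq_nonneg M, norm_nonneg (x - z 0), sq_nonneg (‖x - z 0‖),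
          mul_le_mul_of_nonneg_left hc2 hd0, sq_nonneg ((d:ℝ) - 1)]
      have h0 : (0:ℝ) ≤ 2 * (d:ℝ) * ‖x - z 0‖ := by positivity
      exact le_of_pow_le_pow_left₀ (by norm_num) h0 hsq2
    -- the difference of the linear parts
    set L : EuclideanSpace ℝ (Fin d) →ₗ[ℝ] EuclideanSpace ℝ (Fin d) :=
      S₁.linear - S₂.linear with hL
    have hLv : ∀ i : Fin d, ‖L (v i)‖ ≤ 2 * ε := by
      intro i
      have e1 : S₁.linear (v i) = S₁ (z i.succ) - S₁ (z 0) := by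
        have h := S₁.linearMap_vsub (z i.succ) (z 0)
        simpa [vsub_eq_sub, hv] using h
      have e2 : S₂.linear (v i) = S₂ (z i.succ) - S₂ (z 0) := by
        have h := S₂.linearMap_vsub (z i.succ) (z 0)
        simpa [vsub_eq_sub, hv] using h
      have hLi : L (v i) = (S₁ (z i.succ) - S₂ (z i.succ)) - (S₁ (z 0) - S₂ (z 0)) := by
        rw [hL, LinearMap.sub_apply, e1, e2]; abel
      rw [hLi]
      calc ‖(S₁ (z i.succ) - S₂ (z i.succ)) - (S₁ (z 0) - S₂ (z 0))‖
          ≤ ‖S₁ (z i.succ) - S₂ (z i.succ)‖ + ‖S₁ (z 0) - S₂ (z 0)‖ := norm_sub_le _ _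
        _ ≤ ε + ε := add_le_add (hS _) (hS _)
        _ = 2 * ε := by ring
    have hLx : ‖L (x - z 0)‖ ≤ 2 * ε * ∑ i, |c i| := by
      rw [← hrep, map_sum]
      calc ‖∑ i, L (c i • v i)‖ ≤ ∑ i, ‖L (c i • v i)‖ := norm_sum_le _ _
        _ ≤ ∑ i, |c i| * (2 * ε) := by
            refine Finset.sum_le_sum fun i _ => ?_
            rw [map_smul, norm_smul, Real.norm_eq_abs]
            exact mul_le_mul_of_nonneg_left (hLv i) (abs_nonneg _)
        _ = 2 * ε * ∑ i, |c i| := by rw [← Finset.sum_mul]; ring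
    -- assemble
    have hdiff : S₁ x - S₂ x = L (x - z 0) + (S₁ (z 0) - S₂ (z 0)) := by
      have e1 : S₁.linear (x - z 0) = S₁ x - S₁ (z 0) := by
        have h := S₁.linearMap_vsub x (z 0); simpa [vsub_eq_sub] using h
      have e2 : S₂.linear (x - z 0) = S₂ x - S₂ (z 0) := by
        have h := S₂.linearMap_vsub x (z 0); simpa [vsub_eq_sub] using h
      rw [hL, LinearMap.sub_apply, e1, e2]; abel
    have hmain : ‖S₁ x - S₂ x‖ ≤ 2 * ε * ∑ i, |c i| + ε := by
      rw [hdiff]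
      calc ‖L (x - z 0) + (S₁ (z 0) - S₂ (z 0))‖
          ≤ ‖L (x - z 0)‖ + ‖S₁ (z 0) - S₂ (z 0)‖ := norm_add_le _ _
        _ ≤ 2 * ε * ∑ i, |c i| + ε := add_le_add hLx (hS 0)
    have hfin : 2 * ε * ∑ i, |c i| ≤ 36 * ((d:ℝ) + 1) * ε * ‖x - z 0‖ / lam := by
      have hTnn : (0:ℝ) ≤ ∑ i, |c i| := Finset.sum_nonneg fun i _ => abs_nonneg _
      have h1 : (∑ i, |c i|) ≤ 2 * (d:ℝ) * ‖x - z 0‖ / M := by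
        rw [le_div_iff₀ hMpos]; exact hT
      have h2 : 2 * (d:ℝ) * ‖x - z 0‖ / M ≤ 2 * (d:ℝ) * ‖x - z 0‖ / lam := by
        apply div_le_div_of_nonneg_left _ hlam hlamM
        positivity
      have h3 : (∑ i, |c i|) ≤ 2 * (d:ℝ) * ‖x - z 0‖ / lam := le_trans h1 h2
      calc 2 * ε * ∑ i, |c i| ≤ 2 * ε * (2 * (d:ℝ) * ‖x - z 0‖ / lam) :=
            mul_le_mul_of_nonneg_left h3 (by positivity)
        _ = 4 * (d:ℝ) * ε * ‖x - z 0‖ / lam := by ring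
        _ ≤ 36 * ((d:ℝ) + 1) * ε * ‖x - z 0‖ / lam := by
            apply (div_le_div_iff_of_pos_right hlam).mpr
            nlinarith [norm_nonneg (x - z 0), mul_nonneg hε (norm_nonneg (x - z 0))]
    have hcast : (36 * ((d:ℕ) + 1) : ℝ) = 36 * ((d:ℝ) + 1) := by push_cast; ring
    push_cast
    linarith [hmain, hfin]
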